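/- For k ∈ ℕ with binary expansion k = k_1 + 2k_2 + ... + 2^{q-1}k_q (k_q = 1), let wal_k(x) = (-1)^{k_1 x_1 + ... + k_q x_q} where x = ∑ x_j 2^{-j} ∈ [0,1). If r and k are such that the number of nonzero binary digits of k exceeds r, then ∫_0^1 x^r wal_k(x) dx = 0. -/

import Mathlib

/-- The `j`-th binary digit (1-indexed) of `x ∈ [0,1)`, using the terminating expansion. -/
noncomputable def binDigit (j : ℕ) (x : ℝ) : ℕ := (⌊2 ^ j * x⌋ % 2).toNat

/-- The base-2 Walsh function `wal_k(x) = (-1)^(k₁x₁ + ⋯ + k_q x_q)`. -/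
noncomputable def walsh (k : ℕ) (x : ℝ) : ℝ :=
  (-1 : ℝ) ^ (∑ j ∈ Finset.range k.size, if k.testBit j then binDigit (j + 1) x else 0)

open Finset MeasureTheory intervalIntegral

lemma binDigit_shift (j : ℕ) (x : ℝ) : binDigit (j + 1) x = binDigit j (2 * x) := by
  unfold binDigit
  congr 2
  ring_nf

lemma binDigit_add_one (j : ℕ) (hj : 1 ≤ j) (x : ℝ) :
    binDigit j (x + 1) = binDigit j x := by
  unfold binDigit
  obtain ⟨i, rfl⟩ := Nat.exists_eq_add_of_le hj
  have h : (2:ℝ) ^ (1 + i) * (x + 1) = 2 ^ (1 + i) * x + ((2 * 2 ^ i : ℤ) : ℝ) := by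
    push_cast; ring
  rw [h, Int.floor_add_intCast, Int.add_mul_emod_self_left]

lemma binDigit_one_eq_zero {x : ℝ} (h0 : 0 ≤ x) (h : x < 1 / 2) : binDigit 1 x = 0 := by
  unfold binDigit
  have hfl : ⌊(2:ℝ) ^ 1 * x⌋ = 0 := by
    apply Int.floor_eq_zero_iff.2
    constructor
    · simp; nlinarith
    · simp; nlinarith
  rw [hfl]
  simp

lemma binDigit_one_eq_one {x : ℝ} (h0 : 1 / 2 ≤ x) (h : x < 1) : binDigit 1 x = 1 := by
  unfold binDigit
  have hfl : ⌊(2:ℝ) ^ 1 * x⌋ = 1 := by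
    apply Int.floor_eq_iff.2
    push_cast
    constructor <;> nlinarith
  rw [hfl]
  simp

lemma walsh_eq_range (k N : ℕ) (hN : k.size ≤ N) (x : ℝ) :
    walsh k x = (-1 : ℝ) ^ (∑ j ∈ Finset.range N, if k.testBit j then binDigit (j + 1) x else 0) := by
  have hsum : (∑ j ∈ Finset.range k.size, if k.testBit j then binDigit (j + 1) x else 0)
      = ∑ j ∈ Finset.range N, if k.testBit j then binDigit (j + 1) x else 0 := by
    refine Finset.sum_subset (Finset.range_subset_range.2 hN) ?_
    intro j _ hj
    have hbit : k.testBit j = false := by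
      simp only [Finset.mem_range, not_lt] at hj
      apply Nat.testBit_eq_false_of_lt
      calc k < 2 ^ k.size := Nat.lt_size_self k
        _ ≤ 2 ^ j := Nat.pow_le_pow_right (by norm_num) hj
    simp [hbit]
  unfold walsh
  rw [hsum]

lemma walsh_two_mul (m : ℕ) (x : ℝ) : walsh (2 * m) x = walsh m (2 * x) := by
  rcases Nat.eq_zero_or_pos m with rfl | hm
  · simp [walsh, Nat.size_zero]
  have hsize : (2 * m).size ≤ m.size + 1 := by
    rw [Nat.size_le, pow_succ, mul_comm]
    exact Nat.mul_lt_mul_of_lt_of_le (Nat.lt_size_self m) (le_refl 2) (by norm_num)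
  rw [walsh_eq_range (2 * m) (m.size + 1) hsize x]
  unfold walsh
  have hsum : (∑ j ∈ Finset.range (m.size + 1), if (2 * m).testBit j then binDigit (j + 1) x else 0)
      = ∑ j ∈ Finset.range m.size, if m.testBit j then binDigit (j + 1) (2 * x) else 0 := by
    rw [Finset.sum_range_succ']
    have h0 : (2 * m).testBit 0 = false := by simp [Nat.testBit_zero, Nat.mul_mod_right]
    simp only [h0, Bool.false_eq_true, if_false, add_zero]
    apply Finset.sum_congr rfl
    intro j _
    have hb : (2 * m).testBit (j + 1) = m.testBit j := by
      rw [Nat.testBit_add_one]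
      congr 1
      omega
    rw [hb, binDigit_shift]
  rw [hsum]

lemma walsh_two_mul_add_one (m : ℕ) (x : ℝ) :
    walsh (2 * m + 1) x = (-1 : ℝ) ^ (binDigit 1 x) * walsh m (2 * x) := by
  have hsize : (2 * m + 1).size ≤ m.size + 1 := by
    rw [Nat.size_le, pow_succ]
    have := Nat.lt_size_self m
    omega
  rw [walsh_eq_range (2 * m + 1) (m.size + 1) hsize x]
  unfold walsh
  rw [← pow_add]
  have hsum : (∑ j ∈ Finset.range (m.size + 1), if (2 * m + 1).testBit j then binDigit (j + 1) x else 0)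
      = binDigit 1 x + ∑ j ∈ Finset.range m.size, if m.testBit j then binDigit (j + 1) (2 * x) else 0 := by
    rw [Finset.sum_range_succ']
    have h0 : (2 * m + 1).testBit 0 = true := by simp [Nat.testBit_zero, Nat.mul_add_mod]
    simp only [h0, if_true]
    rw [add_comm]
    congr 1
    refine Finset.sum_congr rfl fun j _ => ?_
    have hb : (2 * m + 1).testBit (j + 1) = m.testBit j := by
      rw [Nat.testBit_add_one]
      congr 1
      omega
    rw [hb, binDigit_shift]
  rw [hsum]

lemma walsh_add_one (k : ℕ) (x : ℝ) : walsh k (x + 1) = walsh k x := by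
  unfold walsh
  congr 1
  refine Finset.sum_congr rfl fun j _ => ?_
  rw [binDigit_add_one (j + 1) (by omega)]

lemma measurable_binDigit (j : ℕ) : Measurable (fun x : ℝ => binDigit j x) := by
  have h1 : Measurable fun x : ℝ => (2:ℝ) ^ j * x := measurable_const_mul _
  have h2 : Measurable fun x : ℝ => ⌊(2:ℝ) ^ j * x⌋ := Int.measurable_floor.comp h1
  exact (measurable_from_top (f := fun z : ℤ => (z % 2).toNat)).comp h2

lemma measurable_walsh (k : ℕ) : Measurable (walsh k) := by
  have h : Measurable fun x : ℝ => ∑ j ∈ Finset.range k.size,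
      if k.testBit j then binDigit (j + 1) x else 0 := by
    apply Finset.measurable_sum
    intro j _
    by_cases hc : k.testBit j
    · simpa [hc] using measurable_binDigit (j + 1)
    · simp [hc]
  exact (measurable_from_top (f := fun n : ℕ => (-1:ℝ) ^ n)).comp h

lemma abs_walsh (k : ℕ) (x : ℝ) : |walsh k x| = 1 := by
  unfold walsh
  rw [abs_pow, abs_neg, abs_one, one_pow]

lemma walsh_intervalIntegrable {g : ℝ → ℝ} (hg : Continuous g) (k : ℕ) (a b : ℝ) :
    IntervalIntegrable (fun x => g x * walsh k x) MeasureTheory.volume a b := by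
  rw [intervalIntegrable_iff]
  apply MeasureTheory.Integrable.mono' (g := fun x => |g x|)
  · exact (hg.abs.integrableOn_Ioc)
  · exact ((hg.measurable.mul (measurable_walsh k)).aestronglyMeasurable)
  · filter_upwards with x
    rw [Real.norm_eq_abs, abs_mul, abs_walsh, mul_one]

lemma lemA (m r : ℕ) :
    ∫ x in (0:ℝ)..(1/2 : ℝ), x ^ r * walsh m (2 * x)
      = (1/2 : ℝ) ^ (r + 1) * ∫ x in (0:ℝ)..1, x ^ r * walsh m x := by
  have h1 : ∀ x : ℝ, x ^ r * walsh m (2 * x)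
      = (fun u => (u / 2) ^ r * walsh m u) (2 * x) := by
    intro x
    simp only
    congr 1
    field_simp
  rw [intervalIntegral.integral_congr (g := fun x => (fun u => (u/2)^r * walsh m u) (2*x))
    (fun x _ => h1 x)]
  rw [intervalIntegral.integral_comp_mul_left (fun u => (u/2)^r * walsh m u) (by norm_num : (2:ℝ) ≠ 0)]
  norm_num
  rw [intervalIntegral.integral_congr (g := fun u => (1/2:ℝ)^r * (u ^ r * walsh m u))
    (fun u _ => by simp only; rw [div_pow, one_div_pow]; ring)]
  rw [intervalIntegral.integral_const_mul]
  ring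

lemma lemB (m r : ℕ) (h : ∀ s, s < r → ∫ x in (0:ℝ)..1, x ^ s * walsh m x = 0) :
    ∫ x in (1/2 : ℝ)..1, x ^ r * walsh m (2 * x)
      = (1/2 : ℝ) ^ (r + 1) * ∫ x in (0:ℝ)..1, x ^ r * walsh m x := by
  have h1 : ∀ x : ℝ, x ^ r * walsh m (2 * x)
      = (fun u => (u / 2) ^ r * walsh m u) (2 * x) := by
    intro x
    simp only
    congr 1
    field_simp
  rw [intervalIntegral.integral_congr (g := fun x => (fun u => (u/2)^r * walsh m u) (2*x))
    (fun x _ => h1 x)]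
  rw [intervalIntegral.integral_comp_mul_left (fun u => (u/2)^r * walsh m u) (by norm_num : (2:ℝ) ≠ 0)]
  norm_num
  have h2 : (∫ u in (1:ℝ)..2, (u/2)^r * walsh m u)
      = ∫ u in (0:ℝ)..1, ((u+1)/2)^r * walsh m u := by
    have ht := intervalIntegral.integral_comp_add_right (a := (0:ℝ)) (b := 1)
      (fun u => (u/2)^r * walsh m u) 1
    norm_num at ht
    rw [← ht]
    refine intervalIntegral.integral_congr fun u _ => ?_
    show ((u+1)/2)^r * walsh m (u+1) = _
    rw [walsh_add_one]
  rw [h2]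
  have h3 : ∀ u : ℝ, ((u+1)/2)^r * walsh m u
      = ∑ s ∈ Finset.range (r+1), ((r.choose s : ℝ) * (1/2:ℝ)^r) * (u ^ s * walsh m u) := by
    intro u
    rw [div_pow, add_pow]
    rw [Finset.sum_div, Finset.sum_mul]
    refine Finset.sum_congr rfl fun s hs => ?_
    rw [one_pow, one_div_pow]
    ring
  rw [intervalIntegral.integral_congr (g := fun u => ∑ s ∈ Finset.range (r+1),
    ((r.choose s : ℝ) * (1/2:ℝ)^r) * (u ^ s * walsh m u)) (fun u _ => h3 u)]
  rw [intervalIntegral.integral_finset_sum (fun s _ => by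
    exact (walsh_intervalIntegrable (by continuity) m 0 1).const_mul _)]
  rw [Finset.sum_eq_single_of_mem r (Finset.self_mem_range_succ r) (fun s hs hne => by
    rw [intervalIntegral.integral_const_mul, h s (by
      rcases Finset.mem_range.1 hs with h'
      omega), mul_zero])]
  rw [intervalIntegral.integral_const_mul, Nat.choose_self]
  push_cast
  ring

lemma ae_ne_point (c : ℝ) : ∀ᵐ x : ℝ, x ≠ c := by
  rw [MeasureTheory.ae_iff]
  simp only [ne_eq, not_not, Set.setOf_eq_eq_singleton]
  exact measure_singleton c

lemma filter_testBit_range (k N : ℕ) (hN : k.size ≤ N) :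
    (Finset.range N).filter (fun j => k.testBit j)
      = (Finset.range k.size).filter (fun j => k.testBit j) := by
  ext j
  simp only [Finset.mem_filter, Finset.mem_range]
  constructor
  · rintro ⟨hj, hb⟩
    refine ⟨?_, hb⟩
    by_contra hge
    push_neg at hge
    have hfalse : k.testBit j = false := by
      apply Nat.testBit_eq_false_of_lt
      calc k < 2 ^ k.size := Nat.lt_size_self k
        _ ≤ 2 ^ j := Nat.pow_le_pow_right (by norm_num) hge
    rw [hfalse] at hb
    exact absurd hb (by simp)
  · rintro ⟨hj, hb⟩
    exact ⟨lt_of_lt_of_le hj hN, hb⟩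

lemma pc_two_mul (m : ℕ) :
    ((Finset.range (2 * m).size).filter (fun j => (2 * m).testBit j)).card
      = ((Finset.range m.size).filter (fun j => m.testBit j)).card := by
  rcases Nat.eq_zero_or_pos m with rfl | hm
  · norm_num
  have hsize : (2 * m).size ≤ m.size + 1 := by
    rw [Nat.size_le, pow_succ]
    have := Nat.lt_size_self m
    omega
  rw [← filter_testBit_range (2 * m) (m.size + 1) hsize]
  rw [Finset.card_filter, Finset.card_filter, Finset.sum_range_succ']
  have h0 : (2 * m).testBit 0 = false := by simp [Nat.testBit_zero, Nat.mul_mod_right]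
  simp only [h0, Bool.false_eq_true, if_false, add_zero]
  apply Finset.sum_congr rfl
  intro j _
  have hb : (2 * m).testBit (j + 1) = m.testBit j := by
    rw [Nat.testBit_add_one]
    congr 1
    omega
  rw [hb]

lemma pc_two_mul_add_one (m : ℕ) :
    ((Finset.range (2 * m + 1).size).filter (fun j => (2 * m + 1).testBit j)).card
      = ((Finset.range m.size).filter (fun j => m.testBit j)).card + 1 := by
  have hsize : (2 * m + 1).size ≤ m.size + 1 := by
    rw [Nat.size_le, pow_succ]
    have := Nat.lt_size_self m
    omega
  rw [← filter_testBit_range (2 * m + 1) (m.size + 1) hsize]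
  rw [Finset.card_filter, Finset.card_filter, Finset.sum_range_succ']
  have h0 : (2 * m + 1).testBit 0 = true := by simp [Nat.testBit_zero, Nat.mul_add_mod]
  simp only [h0, if_true]
  congr 1
  apply Finset.sum_congr rfl
  intro j _
  have hb : (2 * m + 1).testBit (j + 1) = m.testBit j := by
    rw [Nat.testBit_add_one]
    congr 1
    omega
  rw [hb]

lemma main_aux : ∀ k r : ℕ, 1 ≤ k →
    r < ((Finset.range k.size).filter (fun j => k.testBit j)).card →
    (∫ x in (0 : ℝ)..1, x ^ r * walsh k x) = 0 := by
  intro k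
  induction k using Nat.strong_induction_on with
  | _ k ih =>
  intro r hk hr
  rcases Nat.even_or_odd k with ⟨m, hm⟩ | ⟨m, hm⟩
  · have hk2 : k = 2 * m := by omega
    subst hk2
    have hm1 : 1 ≤ m := by omega
    have hrm : r < ((Finset.range m.size).filter (fun j => m.testBit j)).card := by
      rwa [pc_two_mul] at hr
    have hsplit : (∫ x in (0:ℝ)..1, x ^ r * walsh (2 * m) x)
        = (∫ x in (0:ℝ)..(1/2:ℝ), x ^ r * walsh m (2 * x))
          + ∫ x in (1/2:ℝ)..1, x ^ r * walsh m (2 * x) := by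
      rw [← intervalIntegral.integral_add_adjacent_intervals
            (walsh_intervalIntegrable (continuous_pow r) (2 * m) 0 (1/2))
            (walsh_intervalIntegrable (continuous_pow r) (2 * m) (1/2) 1)]
      congr 1
      · exact intervalIntegral.integral_congr fun x _ => by rw [walsh_two_mul]
      · exact intervalIntegral.integral_congr fun x _ => by rw [walsh_two_mul]
    have hIr : (∫ x in (0:ℝ)..1, x ^ r * walsh m x) = 0 := ih m (by omega) r hm1 hrm
    rw [hsplit, lemA m r, lemB m r (fun s hs => ih m (by omega) s hm1 (lt_trans hs hrm)), hIr]
    ring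
  · have hk2 : k = 2 * m + 1 := by omega
    subst hk2
    have hrm : r ≤ ((Finset.range m.size).filter (fun j => m.testBit j)).card := by
      rw [pc_two_mul_add_one] at hr
      omega
    have hsmall : ∀ s, s < r → (∫ x in (0:ℝ)..1, x ^ s * walsh m x) = 0 := by
      intro s hs
      have hspc : s < ((Finset.range m.size).filter (fun j => m.testBit j)).card := by omega
      have hm1 : 1 ≤ m := by
        rcases Nat.eq_zero_or_pos m with rfl | h
        · simp [Nat.size_zero] at hspc
        · exact h
      exact ih m (by omega) s hm1 hspc
    have hsplit : (∫ x in (0:ℝ)..1, x ^ r * walsh (2 * m + 1) x)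
        = (∫ x in (0:ℝ)..(1/2:ℝ), x ^ r * walsh (2 * m + 1) x)
          + ∫ x in (1/2:ℝ)..1, x ^ r * walsh (2 * m + 1) x := by
      rw [intervalIntegral.integral_add_adjacent_intervals
            (walsh_intervalIntegrable (continuous_pow r) (2 * m + 1) 0 (1/2))
            (walsh_intervalIntegrable (continuous_pow r) (2 * m + 1) (1/2) 1)]
    have hA : (∫ x in (0:ℝ)..(1/2:ℝ), x ^ r * walsh (2 * m + 1) x)
        = ∫ x in (0:ℝ)..(1/2:ℝ), x ^ r * walsh m (2 * x) := by
      apply intervalIntegral.integral_congr_ae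
      filter_upwards [ae_ne_point (1/2 : ℝ)] with x hx hmem
      rw [Set.uIoc_of_le (by norm_num : (0:ℝ) ≤ 1/2)] at hmem
      have hx1 : x < 1/2 := lt_of_le_of_ne hmem.2 hx
      rw [walsh_two_mul_add_one, binDigit_one_eq_zero (le_of_lt hmem.1) hx1, pow_zero, one_mul]
    have hB : (∫ x in (1/2:ℝ)..1, x ^ r * walsh (2 * m + 1) x)
        = - ∫ x in (1/2:ℝ)..1, x ^ r * walsh m (2 * x) := by
      rw [← intervalIntegral.integral_neg]
      apply intervalIntegral.integral_congr_ae
      filter_upwards [ae_ne_point (1 : ℝ)] with x hx hmem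
      rw [Set.uIoc_of_le (by norm_num : (1/2:ℝ) ≤ 1)] at hmem
      have hx1 : x < 1 := lt_of_le_of_ne hmem.2 hx
      rw [walsh_two_mul_add_one, binDigit_one_eq_one (le_of_lt hmem.1) hx1, pow_one]
      ring
    rw [hsplit, hA, hB, lemA m r, lemB m r hsmall]
    ring

theorem integral_pow_mul_walsh_eq_zero (r k : ℕ) (hk : 1 ≤ k)
    (hr : r < ((Finset.range k.size).filter (fun j => k.testBit j)).card) :
    ∫ x in (0 : ℝ)..1, x ^ r * walsh k x = 0 :=
  main_aux k r hk hr
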